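/- arXiv:2204.00841 — 2 statements merged into one kernel-verified Lean document; each statement's English description precedes it below -/
import Mathlib

section
/- For each p = (r, p¹, p², p³) on the forward light cone (r = |𝐩| > 0, (p¹)² + (p²)² ≠ 0), the four vectors w₁⁺(p) = (0, p²/√((p¹)²+(p²)²), -p¹/√((p¹)²+(p²)²), 0), w₁⁻(p) = (0, p¹p³/(√((p¹)²+(p²)²) r), p²p³/(√((p¹)²+(p²)²) r), -√((p¹)²+(p²)²)/r), w_{r⁻²}(p) = (1/√2)(1, p¹/r, p²/r, p³/r), w_{r²}(p) = (1/√2)(1, -p¹/r, -p²/r, -p³/r) form an orthonormal basis of ℂ⁴ with respect to the standard Hermitian inner product. -/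
noncomputable section

/-- `r = |𝐩|` for `p = (p⁰, p¹, p², p³)`. -/
def rr (p : Fin 4 → ℝ) : ℝ := Real.sqrt ((p 1) ^ 2 + (p 2) ^ 2 + (p 3) ^ 2)

/-- `ρ = √((p¹)² + (p²)²)`. -/
def rho (p : Fin 4 → ℝ) : ℝ := Real.sqrt ((p 1) ^ 2 + (p 2) ^ 2)

/-- `w₁⁺(p)` as a vector of `ℂ⁴`. -/
def w1plus (p : Fin 4 → ℝ) : EuclideanSpace ℂ (Fin 4) :=
  (WithLp.equiv 2 (Fin 4 → ℂ)).symm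
    ![0, (p 2 / rho p : ℝ), (-(p 1) / rho p : ℝ), 0]

/-- `w₁⁻(p)` as a vector of `ℂ⁴`. -/
def w1minus (p : Fin 4 → ℝ) : EuclideanSpace ℂ (Fin 4) :=
  (WithLp.equiv 2 (Fin 4 → ℂ)).symm
    ![0, (p 1 * p 3 / (rho p * rr p) : ℝ), (p 2 * p 3 / (rho p * rr p) : ℝ),
      (-(rho p) / rr p : ℝ)]

/-- `w_{r⁻²}(p)` as a vector of `ℂ⁴`. -/
def wrinv (p : Fin 4 → ℝ) : EuclideanSpace ℂ (Fin 4) :=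
  (WithLp.equiv 2 (Fin 4 → ℂ)).symm
    ![(1 / Real.sqrt 2 : ℝ), (p 1 / (Real.sqrt 2 * rr p) : ℝ),
      (p 2 / (Real.sqrt 2 * rr p) : ℝ), (p 3 / (Real.sqrt 2 * rr p) : ℝ)]

/-- `w_{r²}(p)` as a vector of `ℂ⁴`. -/
def wr (p : Fin 4 → ℝ) : EuclideanSpace ℂ (Fin 4) :=
  (WithLp.equiv 2 (Fin 4 → ℂ)).symm
    ![(1 / Real.sqrt 2 : ℝ), (-(p 1) / (Real.sqrt 2 * rr p) : ℝ),
      (-(p 2) / (Real.sqrt 2 * rr p) : ℝ), (-(p 3) / (Real.sqrt 2 * rr p) : ℝ)]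

/-- Vector of `ℂ⁴` with real coefficients. -/
def cvec (a : Fin 4 → ℝ) : EuclideanSpace ℂ (Fin 4) :=
  (WithLp.equiv 2 (Fin 4 → ℂ)).symm (fun i => (a i : ℂ))

lemma inner_cvec (a b : Fin 4 → ℝ) :
    (inner ℂ (cvec a) (cvec b) : ℂ)
      = ((a 0 * b 0 + a 1 * b 1 + a 2 * b 2 + a 3 * b 3 : ℝ) : ℂ) := by
  simp [cvec, PiLp.inner_apply, Fin.sum_univ_four, Complex.conj_ofReal]
  ring

lemma w1plus_eq (p : Fin 4 → ℝ) :
    w1plus p = cvec ![0, p 2 / rho p, -(p 1) / rho p, 0] := by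
  ext i; fin_cases i <;> simp [w1plus, cvec]

lemma w1minus_eq (p : Fin 4 → ℝ) :
    w1minus p = cvec ![0, p 1 * p 3 / (rho p * rr p), p 2 * p 3 / (rho p * rr p),
      -(rho p) / rr p] := by
  ext i; fin_cases i <;> simp [w1minus, cvec]

lemma wrinv_eq (p : Fin 4 → ℝ) :
    wrinv p = cvec ![1 / Real.sqrt 2, p 1 / (Real.sqrt 2 * rr p),
      p 2 / (Real.sqrt 2 * rr p), p 3 / (Real.sqrt 2 * rr p)] := by
  ext i; fin_cases i <;> simp [wrinv, cvec]

lemma wr_eq (p : Fin 4 → ℝ) :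
    wr p = cvec ![1 / Real.sqrt 2, -(p 1) / (Real.sqrt 2 * rr p),
      -(p 2) / (Real.sqrt 2 * rr p), -(p 3) / (Real.sqrt 2 * rr p)] := by
  ext i; fin_cases i <;> simp [wr, cvec]

set_option maxHeartbeats 1000000 in
/-- For `p` on the forward light cone with `r = |𝐩| > 0` and `(p¹)² + (p²)² ≠ 0`,
the four vectors `w₁⁺(p), w₁⁻(p), w_{r⁻²}(p), w_{r²}(p)` form an orthonormal
basis of `ℂ⁴` for the standard Hermitian inner product. -/
theorem w_orthonormal_basis (p : Fin 4 → ℝ)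
    (hcone : p 0 = rr p) (hr : 0 < rr p) (hrho : (p 1) ^ 2 + (p 2) ^ 2 ≠ 0) :
    Orthonormal ℂ ![w1plus p, w1minus p, wrinv p, wr p] ∧
    Submodule.span ℂ (Set.range ![w1plus p, w1minus p, wrinv p, wr p]) = ⊤ := by
  have hρpos : (0:ℝ) < rho p := Real.sqrt_pos.2 (lt_of_le_of_ne (by positivity) (Ne.symm hrho))
  have hρ2 : rho p ^ 2 = p 1 ^ 2 + p 2 ^ 2 := Real.sq_sqrt (by positivity)
  have hr2 : rr p ^ 2 = p 1 ^ 2 + p 2 ^ 2 + p 3 ^ 2 := Real.sq_sqrt (by positivity)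
  have hρne : rho p ≠ 0 := ne_of_gt hρpos
  have hrne : rr p ≠ 0 := ne_of_gt hr
  have h2 : Real.sqrt 2 ^ 2 = 2 := Real.sq_sqrt (by norm_num)
  have h2ne : Real.sqrt 2 ≠ 0 := by positivity
  have e : ![w1plus p, w1minus p, wrinv p, wr p]
      = ![cvec ![0, p 2 / rho p, -(p 1) / rho p, 0],
          cvec ![0, p 1 * p 3 / (rho p * rr p), p 2 * p 3 / (rho p * rr p), -(rho p) / rr p],
          cvec ![1 / Real.sqrt 2, p 1 / (Real.sqrt 2 * rr p), p 2 / (Real.sqrt 2 * rr p),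
            p 3 / (Real.sqrt 2 * rr p)],
          cvec ![1 / Real.sqrt 2, -(p 1) / (Real.sqrt 2 * rr p), -(p 2) / (Real.sqrt 2 * rr p),
            -(p 3) / (Real.sqrt 2 * rr p)]] := by
    funext i
    fin_cases i <;> simp [w1plus_eq, w1minus_eq, wrinv_eq, wr_eq]
  rw [e]
  have horth : Orthonormal ℂ
      ![cvec ![0, p 2 / rho p, -(p 1) / rho p, 0],
        cvec ![0, p 1 * p 3 / (rho p * rr p), p 2 * p 3 / (rho p * rr p), -(rho p) / rr p],
        cvec ![1 / Real.sqrt 2, p 1 / (Real.sqrt 2 * rr p), p 2 / (Real.sqrt 2 * rr p),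
          p 3 / (Real.sqrt 2 * rr p)],
        cvec ![1 / Real.sqrt 2, -(p 1) / (Real.sqrt 2 * rr p), -(p 2) / (Real.sqrt 2 * rr p),
          -(p 3) / (Real.sqrt 2 * rr p)]] := by
    rw [orthonormal_iff_ite]
    intro i j
    fin_cases i <;> fin_cases j <;>
      simp only [Matrix.cons_val_zero, Matrix.cons_val_one, Matrix.head_cons,
        Matrix.cons_val_two, Matrix.tail_cons, Matrix.cons_val_three,
        Fin.isValue, Fin.zero_eta, Fin.mk_one, Fin.reduceFinMk, Fin.reduceEq,
        reduceIte, inner_cvec] <;>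
      norm_cast <;>
      field_simp <;>
      (first
        | linear_combination (rr p^2 * (rho p^2 - p 3^2)) * hρ2 - rho p^2 * rr p^2 * hr2
        | linear_combination (-(Real.sqrt 2 * rr p^2 * p 3)) * hρ2
        | linear_combination (p 3 * rho p * Real.sqrt 2^2 * rr p^4) * hρ2
        | linear_combination (-(Real.sqrt 2^4 * rr p^6)) * h2 - 2*Real.sqrt 2^4*rr p^4 * hr2
        | linear_combination (Real.sqrt 2^4 * rr p^6) * h2 + 2*Real.sqrt 2^4*rr p^4 * hr2
        | (push_cast; ring1)
        | (push_cast; linear_combination hρ2)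
        | (push_cast; linear_combination (-1) * hρ2)
        | (push_cast; linear_combination (rho p^2 - p 3^2) * hρ2 - rho p^2 * hr2)
        | (push_cast; linear_combination (-p 3) * hρ2)
        | (push_cast; linear_combination (p 3) * hρ2)
        | nlinarith [hρ2, hr2, h2, sq_nonneg (p 1), sq_nonneg (p 2), sq_nonneg (p 3)])
  exact ⟨horth, LinearIndependent.span_eq_top_of_card_eq_finrank
    horth.linearIndependent (by simp)⟩

end
end

section
/- If K : X × X → ℝ is a symmetric conditionally negative definite kernel with K(x,x) = 0, then there exist a complex Hilbert space H and a map f : X → H such that K(x,y) = ‖f(x) - f(y)‖² for all x, y ∈ X. -/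
open scoped ComplexOrder

section Aux

open Complex Finsupp

noncomputable def psiC {X : Type} (K : X → X → ℝ) (x₀ : X) (x y : X) : ℂ :=
  ((K x x₀ + K y x₀ - K x y : ℝ) : ℂ) / 2

noncomputable def Bform {X : Type} (K : X → X → ℝ) (x₀ : X) (u v : X →₀ ℂ) : ℂ :=
  ∑ x ∈ u.support, ∑ y ∈ v.support,
    (starRingEnd ℂ) (u x) * v y * psiC K x₀ x y

end Aux

section Lemmas
open Complex Finsupp

theorem key_sum {X : Type} (s : Finset X) (g : X → ℂ) :
    ∑ i : Fin s.card, g ((s.equivFin.symm i : X)) = ∑ x ∈ s, g x := by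
  rw [← Finset.sum_coe_sort s g]
  exact Equiv.sum_comp s.equivFin.symm (fun z => g z)


theorem Bform_eq_sum {X : Type} (K : X → X → ℝ) (x₀ : X) (u v : X →₀ ℂ)
    {s t : Finset X} (hs : u.support ⊆ s) (ht : v.support ⊆ t) :
    Bform K x₀ u v = ∑ x ∈ s, ∑ y ∈ t,
      (starRingEnd ℂ) (u x) * v y * psiC K x₀ x y := by
  unfold Bform
  rw [Finset.sum_subset hs, Finset.sum_congr rfl]
  · intro x _
    exact Finset.sum_subset ht (by intro y _ hy; simp [Finsupp.notMem_support_iff.mp hy])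
  · intro x _ hx
    simp [Finsupp.notMem_support_iff.mp hx]

theorem Bform_conj_symm {X : Type} (K : X → X → ℝ) (x₀ : X) (hsymm : ∀ x y, K x y = K y x)
    (u v : X →₀ ℂ) : (starRingEnd ℂ) (Bform K x₀ v u) = Bform K x₀ u v := by
  unfold Bform
  rw [map_sum, Finset.sum_comm]
  refine Finset.sum_congr rfl fun x _ => ?_
  rw [map_sum]
  refine Finset.sum_congr rfl fun y _ => ?_
  have : psiC K x₀ x y = psiC K x₀ y x := by unfold psiC; rw [hsymm x y]; ring_nf
  rw [this]
  have hreal : (starRingEnd ℂ) (psiC K x₀ y x) = psiC K x₀ y x := by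
    unfold psiC
    simp [map_div₀, Complex.conj_ofReal, map_ofNat]
  rw [map_mul, map_mul, hreal, RingHomInvPair.comp_apply_eq₂]
  ring

theorem Bform_add_left {X : Type} (K : X → X → ℝ) (x₀ : X) (u u' v : X →₀ ℂ) :
    Bform K x₀ (u + u') v = Bform K x₀ u v + Bform K x₀ u' v := by
  classical
  rw [Bform_eq_sum K x₀ (u + u') v (Finsupp.support_add) (subset_refl _),
    Bform_eq_sum K x₀ u v (Finset.subset_union_left) (subset_refl _),
    Bform_eq_sum K x₀ u' v (Finset.subset_union_right) (subset_refl _),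
    ← Finset.sum_add_distrib]
  refine Finset.sum_congr rfl fun x _ => ?_
  rw [← Finset.sum_add_distrib]
  refine Finset.sum_congr rfl fun y _ => ?_
  simp [map_add]
  ring

theorem Bform_smul_left {X : Type} (K : X → X → ℝ) (x₀ : X) (r : ℂ) (u v : X →₀ ℂ) :
    Bform K x₀ (r • u) v = (starRingEnd ℂ) r * Bform K x₀ u v := by
  rw [Bform_eq_sum K x₀ (r • u) v (Finsupp.support_smul) (subset_refl _), Bform]
  rw [Finset.mul_sum]
  refine Finset.sum_congr rfl fun x _ => ?_
  rw [Finset.mul_sum]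
  refine Finset.sum_congr rfl fun y _ => ?_
  simp [map_mul]
  ring

theorem double_sum_eq {X : Type} (K : X → X → ℝ) (x₀ : X) (hdiag : ∀ x, K x x = 0)
    (u : X →₀ ℂ) :
    (∑ i : Fin (u.support.card + 1), ∑ j : Fin (u.support.card + 1),
      (starRingEnd ℂ) ((Fin.snoc (fun i => u (u.support.equivFin.symm i)) (-(∑ x ∈ u.support, u x)) : Fin (u.support.card+1) → ℂ) i) *
      (Fin.snoc (fun i => u (u.support.equivFin.symm i)) (-(∑ x ∈ u.support, u x)) : Fin (u.support.card+1) → ℂ) j *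
      (K ((Fin.snoc (fun i => (u.support.equivFin.symm i : X)) x₀ : Fin (u.support.card+1) → X) i)
         ((Fin.snoc (fun i => (u.support.equivFin.symm i : X)) x₀ : Fin (u.support.card+1) → X) j) : ℂ))
    = ∑ x ∈ u.support, ∑ y ∈ u.support,
        (starRingEnd ℂ) (u x) * u y * (((K x y : ℝ) : ℂ) - K x x₀ - K x₀ y) := by
  set s := u.support with hs
  set n := s.card
  set a : ℂ := ∑ x ∈ s, u x with ha
  set p : Fin n → X := fun i => (s.equivFin.symm i : X) with hp
  have hinner : ∀ z : X, ∀ c : ℂ,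
      (∑ j : Fin (n+1),
        c * (Fin.snoc (fun i => u (p i)) (-a) : Fin (n+1) → ℂ) j *
        (K z ((Fin.snoc p x₀ : Fin (n+1) → X) j) : ℂ))
      = (∑ y ∈ s, c * u y * (K z y : ℂ)) + c * (-a) * (K z x₀ : ℂ) := by
    intro z c
    rw [Fin.sum_univ_castSucc]
    simp only [Fin.snoc_castSucc, Fin.snoc_last]
    rw [key_sum s (fun y => c * u y * (K z y : ℂ))]
  rw [Fin.sum_univ_castSucc]
  simp only [Fin.snoc_castSucc, Fin.snoc_last]
  rw [Finset.sum_congr rfl (fun i _ => hinner (p i) ((starRingEnd ℂ) (u (p i)))),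
    hinner x₀ ((starRingEnd ℂ) (-a)),
    key_sum s (fun x => (∑ y ∈ s, (starRingEnd ℂ) (u x) * u y * (K x y : ℂ)) + (starRingEnd ℂ) (u x) * (-a) * (K x x₀ : ℂ))]
  rw [hdiag x₀]
  push_cast
  rw [Finset.sum_add_distrib]
  have h2 : ∑ x ∈ s, (starRingEnd ℂ) (u x) * -a * (K x x₀ : ℂ)
      = -∑ x ∈ s, ∑ y ∈ s, (starRingEnd ℂ) (u x) * u y * (K x x₀ : ℂ) := by
    have e1 : ∀ x ∈ s, (starRingEnd ℂ) (u x) * -a * (K x x₀ : ℂ)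
        = -(∑ y ∈ s, (starRingEnd ℂ) (u x) * u y * (K x x₀ : ℂ)) := fun x _ => by
      rw [ha, mul_neg, neg_mul, neg_inj, Finset.mul_sum, Finset.sum_mul]
    rw [Finset.sum_congr rfl e1, Finset.sum_neg_distrib]
  have h3 : ∑ y ∈ s, (starRingEnd ℂ) (-a) * u y * (K x₀ y : ℂ)
      = -∑ x ∈ s, ∑ y ∈ s, (starRingEnd ℂ) (u x) * u y * (K x₀ y : ℂ) := by
    have e1 : ∀ y ∈ s, (starRingEnd ℂ) (-a) * u y * (K x₀ y : ℂ)
        = -(∑ x ∈ s, (starRingEnd ℂ) (u x) * u y * (K x₀ y : ℂ)) := fun y _ => by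
      rw [ha, map_neg, map_sum, neg_mul, neg_mul, neg_inj, Finset.sum_mul, Finset.sum_mul]
    rw [Finset.sum_congr rfl e1, Finset.sum_neg_distrib, Finset.sum_comm]
  rw [h2, h3, mul_zero, add_zero]
  rw [← sub_eq_add_neg, ← sub_eq_add_neg, ← Finset.sum_sub_distrib, ← Finset.sum_sub_distrib]
  refine Finset.sum_congr rfl fun x _ => ?_
  rw [← Finset.sum_sub_distrib, ← Finset.sum_sub_distrib]
  exact Finset.sum_congr rfl fun y _ => by ring

open scoped ComplexOrder in
theorem Bform_nonneg {X : Type} (K : X → X → ℝ) (x₀ : X)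
    (hsymm : ∀ x y, K x y = K y x) (hdiag : ∀ x, K x x = 0)
    (hcnd : ∀ (n : ℕ) (x : Fin n → X) (α : Fin n → ℂ),
      ∑ i, α i = 0 →
      ∑ i, ∑ j, (starRingEnd ℂ) (α i) * α j * (K (x i) (x j) : ℂ) ≤ 0)
    (u : X →₀ ℂ) : 0 ≤ (Bform K x₀ u u).re := by
  set s := u.support with hs
  set n := s.card with hn
  set a : ℂ := ∑ x ∈ s, u x with ha
  set p : Fin n → X := fun i => (s.equivFin.symm i : X) with hp
  have hsum0 : ∑ i, (Fin.snoc (fun i => u (p i)) (-a) : Fin (n+1) → ℂ) i = 0 := by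
    rw [Fin.sum_univ_castSucc]
    simp only [Fin.snoc_castSucc, Fin.snoc_last]
    rw [hp]
    rw [key_sum s (fun x => u x)]
    simp [ha]
  have hD := hcnd (n+1) (Fin.snoc p x₀) (Fin.snoc (fun i => u (p i)) (-a)) hsum0
  rw [double_sum_eq K x₀ hdiag u] at hD
  have claim : (-2 : ℂ) * Bform K x₀ u u
      = ∑ x ∈ s, ∑ y ∈ s, (starRingEnd ℂ) (u x) * u y * (((K x y : ℝ) : ℂ) - K x x₀ - K x₀ y) := by
    rw [Bform, Finset.mul_sum]
    refine Finset.sum_congr rfl fun x _ => ?_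
    rw [Finset.mul_sum]
    refine Finset.sum_congr rfl fun y _ => ?_
    rw [psiC, hsymm x₀ y]
    push_cast
    ring
  have hre := (Complex.le_def.mp hD).1
  rw [← claim] at hre
  simp only [Complex.mul_re, Complex.zero_re] at hre
  norm_num at hre
  linarith

end Lemmas

section Single
open Complex Finsupp

theorem Bform_single_ne {X : Type} (K : X → X → ℝ) (x₀ : X) {x y : X} (hxy : x ≠ y) :
    Bform K x₀ (Finsupp.single x (1:ℂ) - Finsupp.single y 1)
      (Finsupp.single x 1 - Finsupp.single y 1)
    = psiC K x₀ x x + psiC K x₀ y y - psiC K x₀ x y - psiC K x₀ y x := by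
  classical
  set v : X →₀ ℂ := Finsupp.single x 1 - Finsupp.single y 1 with hv
  have hsupp : v.support ⊆ ({x, y} : Finset X) := by
    refine (Finsupp.support_sub).trans ?_
    refine Finset.union_subset ?_ ?_
    · exact (Finsupp.support_single_subset).trans (by simp)
    · exact (Finsupp.support_single_subset).trans (by simp)
  have hvx : v x = 1 := by
    simp [hv, Finsupp.single_eq_same, Finsupp.single_eq_of_ne' (Ne.symm hxy)]
  have hvy : v y = -1 := by
    simp [hv, Finsupp.single_eq_same, Finsupp.single_eq_of_ne' hxy]
  rw [Bform_eq_sum K x₀ v v hsupp hsupp, Finset.sum_pair hxy,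
    Finset.sum_pair hxy, Finset.sum_pair hxy, hvx, hvy]
  simp only [map_one, map_neg, one_mul, neg_mul, mul_one, neg_neg, mul_neg]
  ring

end Single

/-- A symmetric conditionally negative definite kernel vanishing on the diagonal
is of the form `K(x,y) = ‖f(x) - f(y)‖²` for some map `f` into a complex
Hilbert space. -/
theorem cnd_kernel_eq_dist_sq {X : Type} (K : X → X → ℝ)
    (hsymm : ∀ x y, K x y = K y x)
    (hdiag : ∀ x, K x x = 0)
    (hcnd : ∀ (n : ℕ) (x : Fin n → X) (α : Fin n → ℂ),
      ∑ i, α i = 0 →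
      ∑ i, ∑ j, (starRingEnd ℂ) (α i) * α j * (K (x i) (x j) : ℂ) ≤ 0) :
    ∃ (H : Type) (_ : NormedAddCommGroup H) (_ : InnerProductSpace ℂ H)
      (_ : CompleteSpace H) (f : X → H),
      ∀ x y, K x y = ‖f x - f y‖ ^ 2 := by
  rcases isEmpty_or_nonempty X with hX | ⟨⟨x₀⟩⟩
  · exact ⟨ℂ, inferInstance, inferInstance, inferInstance,
      fun x => isEmptyElim x, fun x => isEmptyElim x⟩
  letI core : PreInnerProductSpace.Core ℂ (X →₀ ℂ) :=
    { inner := Bform K x₀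
      conj_inner_symm := fun u v => Bform_conj_symm K x₀ hsymm u v
      re_inner_nonneg := fun u => Bform_nonneg K x₀ hsymm hdiag hcnd u
      add_left := Bform_add_left K x₀
      smul_left := fun u v r => Bform_smul_left K x₀ r u v }
  letI : SeminormedAddCommGroup (X →₀ ℂ) :=
    @InnerProductSpace.Core.toSeminormedAddCommGroup ℂ (X →₀ ℂ) _ _ _ core
  letI ns : NormedSpace ℂ (X →₀ ℂ) :=
    @InnerProductSpace.Core.toNormedSpace ℂ (X →₀ ℂ) _ _ _ core
  letI ips : InnerProductSpace ℂ (X →₀ ℂ) :=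
    { toNormedSpace := ns
      toInner := core.toInner
      norm_sq_eq_re_inner := fun u => by
        have h : ‖u‖ = Real.sqrt (RCLike.re (core.inner u u)) := rfl
        rw [h, Real.sq_sqrt (core.re_inner_nonneg u)]
      conj_inner_symm := core.conj_inner_symm
      add_left := core.add_left
      smul_left := core.smul_left }
  set Q := SeparationQuotient (X →₀ ℂ)
  set H := UniformSpace.Completion Q
  refine ⟨H, inferInstance, inferInstance, inferInstance,
    fun x => ((SeparationQuotient.mk (Finsupp.single x 1) : Q) : H), fun x y => ?_⟩
  by_cases hxy : x = y
  · subst hxy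
    simp [hdiag x]
  · have h1 : ((SeparationQuotient.mk (Finsupp.single x 1) : Q) : H)
        - ((SeparationQuotient.mk (Finsupp.single y 1) : Q) : H)
        = ((SeparationQuotient.mk (Finsupp.single x (1:ℂ) - Finsupp.single y 1) : Q) : H) := by
      rw [← UniformSpace.Completion.coe_sub]
      norm_cast
    rw [h1, UniformSpace.Completion.norm_coe, SeparationQuotient.norm_mk]
    have h2 := inner_self_eq_norm_sq (𝕜 := ℂ)
      (Finsupp.single x (1:ℂ) - Finsupp.single y 1)
    rw [← h2]
    have h3 : (inner ℂ (Finsupp.single x (1:ℂ) - Finsupp.single y 1)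
        (Finsupp.single x (1:ℂ) - Finsupp.single y 1) : ℂ)
        = Bform K x₀ (Finsupp.single x 1 - Finsupp.single y 1)
          (Finsupp.single x 1 - Finsupp.single y 1) := rfl
    rw [h3, Bform_single_ne K x₀ hxy]
    simp only [psiC]
    rw [hdiag x, hdiag y, hsymm y x]
    push_cast
    norm_num
    ring
end
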